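/- Let m be odd, m ≥ 5, m = 2k+1, with m not divisible by 3. Then the 2m arcs (x_{k+i}, y_{k+2i}) and (y_{2k+2i}, x_i), i ∈ Z_m (subscripts mod m), form a single directed cycle of length 2m on the vertex set {x_0,...,x_{m-1}} ∪ {y_0,...,y_{m-1}}. -/

import Mathlib

/-- The `2m` leftover arcs of mixed differences of the Construction:
`(x_{k+i}, y_{k+2i})` and `(y_{2k+2i}, x_i)` for `i ∈ Z_m`, where `x`-vertices
are `Sum.inl` and `y`-vertices are `Sum.inr`. -/
def leftoverArcs (m k : ℕ) : Set ((ZMod m ⊕ ZMod m) × (ZMod m ⊕ ZMod m)) :=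
  {p | ∃ i : ZMod m,
    p = (Sum.inl ((k : ZMod m) + i), Sum.inr ((k : ZMod m) + 2 * i)) ∨
    p = (Sum.inr (2 * (k : ZMod m) + 2 * i), Sum.inl i)}

/-- For odd `m = 2k+1 ≥ 5` not divisible by 3, the `2m` leftover arcs form a
single directed cycle of length `2m` through all the vertices
`x_0, …, x_{m-1}, y_0, …, y_{m-1}`. -/
theorem leftover_is_single_cycle (m k : ℕ) (hm : m = 2 * k + 1) (h5 : 5 ≤ m)
    (h3 : ¬ 3 ∣ m) :
    ∃ c : ZMod (2 * m) → ZMod m ⊕ ZMod m, Function.Bijective c ∧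
      ∀ t : ZMod (2 * m), (c t, c (t + 1)) ∈ leftoverArcs m k := by
  haveI : NeZero m := ⟨by omega⟩
  haveI : NeZero (2 * m) := ⟨by omega⟩
  obtain ⟨K, hK⟩ : ∃ K : ZMod m, K = (k : ZMod m) := ⟨_, rfl⟩
  have hsum : 2 * K + 1 = 0 := by
    have h0 : ((2 * k + 1 : ℕ) : ZMod m) = 0 := by rw [← hm]; exact ZMod.natCast_self m
    push_cast at h0
    rw [hK]
    linear_combination h0
  obtain ⟨u, hu⟩ : ∃ u : ZMod m, u = K + 1 := ⟨_, rfl⟩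
  have h2u : 2 * u = 1 := by rw [hu]; linear_combination hsum
  have hKunit : IsUnit K := IsUnit.of_mul_eq_one (a := K) (-2) (by linear_combination -hsum)
  have huunit : IsUnit u := IsUnit.of_mul_eq_one (a := u) 2 (by linear_combination h2u)
  have h3unit : IsUnit (3 : ZMod m) := by
    have hcop : Nat.Coprime 3 m := (Nat.prime_three.coprime_iff_not_dvd).mpr h3
    have := (ZMod.isUnit_iff_coprime 3 m).mpr hcop
    simpa using this
  obtain ⟨e, he⟩ : ∃ e : ZMod m, e = -(3 * K * u) := ⟨_, rfl⟩
  have heunit : IsUnit e := by rw [he]; exact ((h3unit.mul hKunit).mul huunit).neg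
  have h2e : 2 * e = -(3 * K) := by rw [he]; linear_combination (-(3 * K)) * h2u
  set p : ZMod (2 * m) →+* ZMod 2 := ZMod.castHom (dvd_mul_right 2 m) (ZMod 2) with hp
  set q : ZMod (2 * m) →+* ZMod m := ZMod.castHom (dvd_mul_left m 2) (ZMod m) with hq
  have hcop2m : Nat.Coprime 2 m :=
    (Nat.prime_two.coprime_iff_not_dvd).mpr (by omega)
  -- injectivity of the pair (p, q)
  have hpq : ∀ t t' : ZMod (2 * m), p t = p t' → q t = q t' → t = t' := by
    intro t t' h1 h2
    have hd1 : p (t - t') = 0 := by rw [map_sub, h1, sub_self]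
    have hd2 : q (t - t') = 0 := by rw [map_sub, h2, sub_self]
    set d := t - t' with hdd
    have hv : d = ((d.val : ℕ) : ZMod (2 * m)) := (ZMod.natCast_rightInverse d).symm
    have hdvd1 : 2 ∣ d.val := by
      have h' : ((d.val : ℕ) : ZMod 2) = 0 := by
        have := hd1; rw [hv, map_natCast] at this; exact this
      exact (ZMod.natCast_eq_zero_iff _ _).mp h'
    have hdvd2 : m ∣ d.val := by
      have h' : ((d.val : ℕ) : ZMod m) = 0 := by
        have := hd2; rw [hv, map_natCast] at this; exact this
      exact (ZMod.natCast_eq_zero_iff _ _).mp h'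
    have hdvd : 2 * m ∣ d.val := hcop2m.mul_dvd_of_dvd_of_dvd hdvd1 hdvd2
    have hz : d.val = 0 := Nat.eq_zero_of_dvd_of_lt hdvd (ZMod.val_lt d)
    have hd0 : d = 0 := by rw [hv, hz]; simp
    exact sub_eq_zero.mp hd0
  -- the cycle map
  set c : ZMod (2 * m) → ZMod m ⊕ ZMod m := fun t =>
    if p t = 0 then Sum.inl (q t * (u * e)) else Sum.inr (2 * ((q t - 1) * (u * e)) - K)
    with hc
  have hueunit : IsUnit (u * e) := huunit.mul heunit
  have h2unit : IsUnit (2 : ZMod m) := IsUnit.of_mul_eq_one (a := (2 : ZMod m)) u h2u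
  have hparity : ∀ z : ZMod 2, z = 0 ∨ z = 1 := by decide
  refine ⟨c, ?_, ?_⟩
  · rw [Fintype.bijective_iff_injective_and_card]
    constructor
    · intro t t' h
      by_cases h1 : p t = 0 <;> by_cases h2 : p t' = 0 <;>
        simp only [hc, h1, h2, if_pos, if_neg, if_true, if_false] at h
      · have h' := Sum.inl.inj h
        have hq' : q t = q t' := hueunit.mul_right_cancel h'
        exact hpq t t' (h1.trans h2.symm) hq'
      · exact absurd h (by simp)
      · exact absurd h (by simp)
      · have h' := Sum.inr.inj h
        have h'' : (2 : ZMod m) * ((q t - 1) * (u * e)) = 2 * ((q t' - 1) * (u * e)) := by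
          linear_combination h'
        have h''' : q t - 1 = q t' - 1 :=
          hueunit.mul_right_cancel (h2unit.mul_left_cancel h'')
        have hq' : q t = q t' := by linear_combination h'''
        have hp' : p t = p t' := by
          rcases hparity (p t) with h | h <;> rcases hparity (p t') with h' | h' <;>
            simp_all
        exact hpq t t' hp' hq'
    · simp [ZMod.card]; omega
  · intro t
    have hq1 : q (t + 1) = q t + 1 := by rw [map_add, map_one]
    have hp1 : p (t + 1) = p t + 1 := by rw [map_add, map_one]
    by_cases h1 : p t = 0
    · have h2 : ¬ p (t + 1) = 0 := by rw [hp1, h1]; decide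
      simp only [hc, h1, h2, if_true, if_false, if_pos, if_neg, not_false_iff]
      refine ⟨q t * (u * e) - K, Or.inl ?_⟩
      rw [hq1, Prod.ext_iff]
      constructor
      · simp only [Sum.inl.injEq]; rw [← hK]; ring
      · simp only [Sum.inr.injEq]; rw [← hK]; ring
    · have h2 : p (t + 1) = 0 := by
        rcases hparity (p t) with h | h
        · exact absurd h h1
        · rw [hp1, h]; decide
      simp only [hc, h1, h2, if_true, if_false, if_pos, if_neg, not_false_iff]
      refine ⟨(q t + 1) * (u * e), Or.inr ?_⟩
      rw [hq1, Prod.ext_iff]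
      constructor
      · simp only [Sum.inr.injEq]
        rw [← hK]
        linear_combination (-2 * e) * h2u + (-1 : ZMod m) * h2e
      · simp only [Sum.inl.injEq]
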